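/- If X is a graph-measurable random set in a separable Banach space X, then its polar set X^o(ω) = {u ∈ X* : sup_{x∈X(ω)} ⟨u,x⟩ ≤ 1} is a random closed convex set in the dual space X* equipped with the weak-star topology (which is Polish since X is separable). -/

import Mathlib

open MeasureTheory Set Function Filter Topology
open scoped ENNReal NNReal

namespace Stmt8Aux

lemma sup_approx {α : Type*} [MeasurableSpace α] (μ : Measure α) {g : ℕ → Set α}
    (hg : Monotone g) (hfin : μ (⋃ n, g n) ≠ ⊤) {δ : ℝ≥0∞} (hδ : δ ≠ 0) :
    ∃ n, μ (⋃ n, g n) ≤ μ (g n) + δ := by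
  rcases le_or_gt (μ (⋃ n, g n)) δ with h | h
  · exact ⟨0, h.trans le_add_self⟩
  have h0 : μ (⋃ n, g n) ≠ 0 := fun h' => by simp [h'] at h
  have hlt : μ (⋃ n, g n) - δ < μ (⋃ n, g n) := ENNReal.sub_lt_self hfin h0 hδ
  rw [hg.measure_iUnion] at hlt
  obtain ⟨n, hn⟩ := lt_iSup_iff.mp hlt
  rw [hg.measure_iUnion]
  exact ⟨n, tsub_le_iff_right.mp hn.le⟩

lemma analytic_inner {α : Type*} [TopologicalSpace α] [PolishSpace α]
    [MeasurableSpace α] [BorelSpace α] (μ : Measure α) [IsFiniteMeasure μ]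
    {T : Set α} (hT : AnalyticSet T) {ε : ℝ≥0∞} (hε : ε ≠ 0) :
    ∃ B, B ⊆ T ∧ MeasurableSet B ∧ μ T ≤ μ B + ε := by
  rw [MeasureTheory.AnalyticSet] at hT
  rcases hT with rfl | ⟨f, fc, rfl⟩
  · exact ⟨∅, Subset.rfl, MeasurableSet.empty, by simp⟩
  letI := TopologicalSpace.upgradeIsCompletelyMetrizable α
  set Sk : ℕ → (ℕ → ℕ) → Set (ℕ → ℕ) := fun k v => {σ | ∀ i < k, σ i ≤ v i} with hSk
  set A : ℕ → (ℕ → ℕ) → Set α := fun k v => f '' Sk k v with hA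
  have hA0 : ∀ v, A 0 v = range f := by
    intro v
    have : Sk 0 v = univ := by ext σ; simp [hSk]
    simp [hA, this, Set.image_univ]
  have hεk : ∀ k : ℕ, (ε / 2 ^ (k+1) : ℝ≥0∞) ≠ 0 := by
    intro k h
    rcases (ENNReal.div_eq_zero_iff).mp h with h | h
    · exact hε h
    · exact (ENNReal.pow_ne_top (by norm_num : (2:ℝ≥0∞) ≠ ⊤)) h
  have key : ∀ k (v : ℕ → ℕ), ∃ n : ℕ,
      μ (A k v) ≤ μ (A (k+1) (update v k n)) + ε / 2 ^ (k+1) := by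
    intro k v
    have hSmono : Monotone fun n => Sk (k+1) (update v k n) := by
      intro a b hab σ hσ i hi
      rcases eq_or_ne i k with rfl | hik
      · have := hσ i hi; rw [update_self] at this ⊢; exact this.trans hab
      · have := hσ i hi; rwa [update_of_ne hik] at this ⊢
    have hmono : Monotone fun n => A (k+1) (update v k n) :=
      fun a b hab => image_mono (hSmono hab)
    have hunion : A k v = ⋃ n, A (k+1) (update v k n) := by
      have : Sk k v = ⋃ n, Sk (k+1) (update v k n) := by
        ext σ
        simp only [mem_iUnion, hSk, mem_setOf_eq]
        constructor
        · intro h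
          refine ⟨σ k, fun i hi => ?_⟩
          rcases eq_or_ne i k with rfl | hik
          · rw [update_self]
          · rw [update_of_ne hik]; exact h i (by omega)
        · rintro ⟨n, h⟩ i hi
          have := h i (by omega)
          rwa [update_of_ne (by omega : i ≠ k)] at this
      rw [hA]; simp only [this, image_iUnion]
    obtain ⟨n, hn⟩ := sup_approx μ hmono (by rw [← hunion]; exact measure_ne_top μ _) (hεk k)
    rw [← hunion] at hn
    exact ⟨n, hn⟩
  choose pick hpick using key
  let pfun : ℕ → (ℕ → ℕ) := fun k =>
    Nat.rec (fun _ => 0) (fun k pk => update pk k (pick k pk)) k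
  have pfun_succ : ∀ k, pfun (k+1) = update (pfun k) k (pick k (pfun k)) := fun _ => rfl
  set m : ℕ → ℕ := fun i => pfun (i+1) i with hm
  have coh : ∀ k i, i < k → pfun k i = m i := by
    intro k
    induction k with
    | zero => intro i hi; exact absurd hi (Nat.not_lt_zero i)
    | succ k ih =>
      intro i hi
      rcases Nat.lt_succ_iff_lt_or_eq.mp hi with h | rfl
      · rw [pfun_succ, update_of_ne (by omega : i ≠ k), ih i h, hm]
      · rfl
  have SkA_eq : ∀ k, A k (pfun k) = A k m := by
    intro k
    have : Sk k (pfun k) = Sk k m := by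
      ext σ
      simp only [hSk, mem_setOf_eq]
      exact ⟨fun h i hi => by rw [← coh k i hi]; exact h i hi,
             fun h i hi => by rw [coh k i hi]; exact h i hi⟩
    show f '' Sk k (pfun k) = f '' Sk k m
    rw [this]
  have sum_bound : ∀ k, (∑ i ∈ Finset.range k, ε / 2 ^ (i+1)) + ε / 2 ^ k ≤ ε := by
    intro k
    induction k with
    | zero => simp
    | succ k ih =>
      rw [Finset.sum_range_succ, add_assoc, ENNReal.div_add_div_same, ← two_mul, pow_succ,
        mul_comm ((2:ℝ≥0∞) ^ k) 2, ENNReal.mul_div_mul_left _ _ (by norm_num) (by norm_num)]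
      exact ih
  have inv : ∀ k, μ (range f) ≤ μ (A k (pfun k)) + ∑ i ∈ Finset.range k, ε / 2 ^ (i+1) := by
    intro k
    induction k with
    | zero => simp [hA0]
    | succ k ih =>
      calc μ (range f) ≤ μ (A k (pfun k)) + ∑ i ∈ Finset.range k, ε / 2 ^ (i+1) := ih
        _ ≤ (μ (A (k+1) (pfun (k+1))) + ε / 2 ^ (k+1)) + ∑ i ∈ Finset.range k, ε / 2 ^ (i+1) := by
            rw [pfun_succ]; exact add_le_add_left (hpick k (pfun k)) _
        _ = μ (A (k+1) (pfun (k+1))) + ∑ i ∈ Finset.range (k+1), ε / 2 ^ (i+1) := by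
            rw [Finset.sum_range_succ]; ring
  set D : ℕ → Set α := fun k => closure (A k m) with hD
  have hmainbound : ∀ k, μ (range f) ≤ μ (D k) + ε := by
    intro k
    refine (inv k).trans (add_le_add ?_ ?_)
    · rw [SkA_eq]; exact measure_mono subset_closure
    · exact le_trans (self_le_add_right _ _) (sum_bound k)
  have hsub : (⋂ k, D k) ⊆ range f := by
    intro y hy
    have hy' : ∀ k, ∃ σ, σ ∈ Sk k m ∧ dist y (f σ) < 1/(k+1) := by
      intro k
      have hyk : y ∈ closure (A k m) := mem_iInter.mp hy k
      rcases Metric.mem_closure_iff.mp hyk (1/(k+1)) (by positivity) with ⟨z, hz, hdz⟩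
      rcases hz with ⟨σ, hσ, rfl⟩
      exact ⟨σ, hσ, hdz⟩
    choose σ hσm hσd using hy'
    set τ : ℕ → (ℕ → ℕ) := fun k i => min (σ k i) (m i) with hτ
    set K : Set (ℕ → ℕ) := univ.pi (fun i => Iic (m i)) with hK
    have hKc : IsCompact K := isCompact_univ_pi fun i => (finite_Iic (m i)).isCompact
    have hτK : ∀ k, τ k ∈ K := by
      intro k
      rw [hK, mem_univ_pi]
      intro i
      exact mem_Iic.mpr (min_le_right _ _)
    obtain ⟨a, _, ψ, hψ, hconv⟩ := hKc.tendsto_subseq hτK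
    have hσconv : Tendsto (fun j => σ (ψ j)) atTop (𝓝 a) := by
      rw [tendsto_pi_nhds]
      intro i
      have h1 : Tendsto (fun j => τ (ψ j) i) atTop (𝓝 (a i)) :=
        ((continuous_apply i).tendsto a).comp hconv
      have h2 : ∀ᶠ j in atTop, τ (ψ j) i = a i := by
        have := h1 ((isOpen_discrete {a i}).mem_nhds rfl)
        simpa using this
      have h3 : ∀ᶠ j in atTop, σ (ψ j) i = τ (ψ j) i := by
        filter_upwards [eventually_gt_atTop i] with j hj
        have hiψ : i < ψ j := lt_of_lt_of_le hj hψ.le_apply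
        simp [hτ, min_eq_left (hσm (ψ j) i hiψ)]
      have : ∀ᶠ j in atTop, σ (ψ j) i = a i := by
        filter_upwards [h2, h3] with j h2j h3j
        rw [h3j, h2j]
      exact tendsto_const_nhds.congr' (by filter_upwards [this] with j hj; rw [hj])
    have hfconv : Tendsto (fun j => f (σ (ψ j))) atTop (𝓝 (f a)) :=
      ((fc.tendsto a).comp hσconv)
    have hfy : Tendsto (fun j => f (σ (ψ j))) atTop (𝓝 y) := by
      rw [tendsto_iff_dist_tendsto_zero]
      refine squeeze_zero (fun j => dist_nonneg) (fun j => ?_)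
        tendsto_one_div_add_atTop_nhds_zero_nat
      rw [dist_comm]
      refine le_trans (hσd (ψ j)).le ?_
      gcongr
      exact_mod_cast hψ.le_apply (x := j)
    exact ⟨a, tendsto_nhds_unique hfconv hfy⟩
  have hmeas : ∀ k, MeasurableSet (D k) := fun k => isClosed_closure.measurableSet
  have hDanti : Antitone D := by
    intro k l hkl
    refine closure_mono (image_mono ?_)
    intro σ hσ i hi
    exact hσ i (lt_of_lt_of_le hi hkl)
  refine ⟨⋂ k, D k, hsub, MeasurableSet.iInter hmeas, ?_⟩
  rw [hDanti.measure_iInter (fun k => (hmeas k).nullMeasurableSet) ⟨0, measure_ne_top μ _⟩]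
  calc μ (range f) ≤ ⨅ k, (μ (D k) + ε) := le_iInf hmainbound
    _ = (⨅ k, μ (D k)) + ε := by rw [ENNReal.iInf_add]

lemma exists_cantor_rep {Ω β : Type*} [MeasurableSpace Ω] [MeasurableSpace β]
    {s : Set (Ω × β)} (hs : MeasurableSet s) :
    ∃ (φ : Ω → (ℕ → Bool)) (s' : Set ((ℕ → Bool) × β)), Measurable φ ∧ MeasurableSet s' ∧
      s = (fun p : Ω × β => (φ p.1, p.2)) ⁻¹' s' := by
  classical
  let M : MeasurableSpace (Ω × β) :=
    { MeasurableSet' := fun t =>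
        ∃ (φ : Ω → (ℕ → Bool)) (s' : Set ((ℕ → Bool) × β)), Measurable φ ∧ MeasurableSet s' ∧
          t = (fun p : Ω × β => (φ p.1, p.2)) ⁻¹' s'
      measurableSet_empty :=
        ⟨fun _ _ => false, ∅, measurable_const, MeasurableSet.empty, by simp⟩
      measurableSet_compl := by
        rintro t ⟨φ, s', hφ, hs', rfl⟩
        exact ⟨φ, s'ᶜ, hφ, hs'.compl, by rw [preimage_compl]⟩
      measurableSet_iUnion := by
        intro t ht
        choose φ s' hφ hs' hteq using ht
        refine ⟨fun ω n => φ (Nat.unpair n).1 ω (Nat.unpair n).2,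
          ⋃ k, (fun p : (ℕ → Bool) × β => (fun mm => p.1 (Nat.pair k mm), p.2)) ⁻¹' (s' k),
          ?_, ?_, ?_⟩
        · exact measurable_pi_lambda _ fun n =>
            (measurable_pi_apply _).comp (hφ (Nat.unpair n).1)
        · refine MeasurableSet.iUnion fun k => ?_
          refine Measurable.prodMk ?_ measurable_snd (hs' k)
          exact measurable_pi_lambda _ fun mm => (measurable_pi_apply _).comp measurable_fst
        · ext p
          simp only [mem_iUnion, mem_preimage, hteq]
          have hkey : ∀ k, (fun mm => (fun n => φ (Nat.unpair n).1 p.1 (Nat.unpair n).2)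
              (Nat.pair k mm)) = φ k p.1 := by
            intro k; funext mm; simp [Nat.unpair_pair]
          constructor
          · rintro ⟨k, hk⟩
            exact ⟨k, by rw [hkey k]; exact hk⟩
          · rintro ⟨k, hk⟩
            refine ⟨k, ?_⟩
            rw [hkey k] at hk
            exact hk }
  have h1 : MeasurableSpace.comap Prod.fst (inferInstance : MeasurableSpace Ω) ≤ M := by
    rintro t ⟨A, hA, rfl⟩
    refine ⟨fun ω _ => A.piecewise (fun _ => true) (fun _ => false) ω,
      {p | p.1 0 = true}, ?_, ?_, ?_⟩
    · exact measurable_pi_lambda _ fun _ =>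
        Measurable.piecewise hA measurable_const measurable_const
    · have h : Measurable fun p : (ℕ → Bool) × β => p.1 0 :=
        (measurable_pi_apply 0).comp measurable_fst
      exact h (measurableSet_singleton true)
    · ext p
      by_cases h : p.1 ∈ A <;> simp [h, Set.piecewise]
  have h2 : MeasurableSpace.comap Prod.snd (inferInstance : MeasurableSpace β) ≤ M := by
    rintro t ⟨A, hA, rfl⟩
    exact ⟨fun _ _ => false, Prod.snd ⁻¹' A, measurable_const, measurable_snd hA, rfl⟩
  have hle : (Prod.instMeasurableSpace : MeasurableSpace (Ω × β)) ≤ M := sup_le h1 h2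
  exact hle s hs

lemma measurable_projection {Ω β : Type*} [MeasurableSpace Ω] [TopologicalSpace β]
    [PolishSpace β] [MeasurableSpace β] [BorelSpace β]
    (P : Measure Ω) [IsFiniteMeasure P] (hPc : P.IsComplete)
    {s : Set (Ω × β)} (hs : MeasurableSet s) : MeasurableSet (Prod.fst '' s) := by
  obtain ⟨φ, s', hφ, hs', rfl⟩ := exists_cantor_rep hs
  have himg : Prod.fst '' ((fun p : Ω × β => (φ p.1, p.2)) ⁻¹' s') = φ ⁻¹' (Prod.fst '' s') := by
    ext ω
    constructor
    · rintro ⟨⟨ω', x⟩, hp, rfl⟩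
      exact ⟨(φ ω', x), hp, rfl⟩
    · rintro ⟨⟨g, x⟩, hgx, hg⟩
      refine ⟨(ω, x), ?_, rfl⟩
      have : g = φ ω := hg
      rw [mem_preimage]
      rw [← this]
      exact hgx
  rw [himg]
  set T := Prod.fst '' s' with hT
  haveI : PolishSpace (ℕ → Bool) := by
    haveI : TopologicalSpace.SeparableSpace (ℕ → Bool) := inferInstance
    haveI : TopologicalSpace.IsCompletelyMetrizableSpace (ℕ → Bool) := inferInstance
    infer_instance
  have hTa : AnalyticSet T := hs'.analyticSet.image_of_continuous continuous_fst
  set ν := P.map φ with hν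
  have hνfin : IsFiniteMeasure ν :=
    ⟨by rw [hν, Measure.map_apply hφ MeasurableSet.univ]; exact measure_lt_top P _⟩
  have hB : ∀ j : ℕ, ∃ B, B ⊆ T ∧ MeasurableSet B ∧ ν T ≤ ν B + ((j : ℝ≥0∞) + 1)⁻¹ := by
    intro j
    refine analytic_inner ν hTa ?_
    exact ENNReal.inv_ne_zero.mpr (by simp)
  choose B hBT hBm hBν using hB
  have hB'm : MeasurableSet (⋃ j, B j) := MeasurableSet.iUnion hBm
  have hB'T : (⋃ j, B j) ⊆ T := iUnion_subset hBT
  have hνB' : ν T ≤ ν (⋃ j, B j) := by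
    refine ENNReal.le_of_forall_pos_le_add fun δ hδ _ => ?_
    obtain ⟨n, hn⟩ := ENNReal.exists_inv_nat_lt (by exact_mod_cast hδ.ne' : (δ : ℝ≥0∞) ≠ 0)
    refine (hBν n).trans (add_le_add (measure_mono (subset_iUnion B n)) ?_)
    refine le_trans ?_ hn.le
    exact ENNReal.inv_le_inv.mpr (by simp)
  have hnull : P ((φ ⁻¹' T) \ (φ ⁻¹' (⋃ j, B j))) = 0 := by
    have hsub2 : (φ ⁻¹' T) \ (φ ⁻¹' (⋃ j, B j)) ⊆ φ ⁻¹' (toMeasurable ν T \ (⋃ j, B j)) :=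
      fun ω hω => ⟨subset_toMeasurable ν T hω.1, hω.2⟩
    refine le_antisymm (le_trans (measure_mono hsub2) ?_) (zero_le)
    rw [← Measure.map_apply hφ ((measurableSet_toMeasurable ν T).diff hB'm), ← hν,
      measure_diff (hB'T.trans (subset_toMeasurable ν T)) hB'm.nullMeasurableSet
        (measure_ne_top ν _), measure_toMeasurable]
    simp [tsub_eq_zero_of_le hνB']
  have hdecomp : φ ⁻¹' T = (φ ⁻¹' (⋃ j, B j)) ∪ ((φ ⁻¹' T) \ (φ ⁻¹' (⋃ j, B j))) :=
    (union_diff_cancel (preimage_mono hB'T)).symm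
  rw [hdecomp]
  exact (hφ hB'm).union (hPc.out _ hnull)

end Stmt8Aux

/-- Lemma 3.3: the polar X° of a graph-measurable random set X is a random closed convex
set in the dual space with the weak-star topology. -/
theorem stmt8 {Ω X : Type*} [MeasurableSpace Ω] [NormedAddCommGroup X] [NormedSpace ℝ X]
    [CompleteSpace X] [TopologicalSpace.SeparableSpace X] [MeasurableSpace X] [BorelSpace X]
    [MeasurableSpace (WeakDual ℝ X)] [BorelSpace (WeakDual ℝ X)]
    (P : Measure Ω) [IsProbabilityMeasure P] (hPc : P.IsComplete)
    (C : Ω → Set X) (hCgr : MeasurableSet {p : Ω × X | p.2 ∈ C p.1}) :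
    MeasurableSet {p : Ω × WeakDual ℝ X | ∀ x ∈ C p.1, p.2 x ≤ 1} ∧
    (∀ ω, IsClosed {u : WeakDual ℝ X | ∀ x ∈ C ω, u x ≤ 1}) ∧
    (∀ ω, Convex ℝ {u : WeakDual ℝ X | ∀ x ∈ C ω, u x ≤ 1}) := by
  classical
  haveI : Nonempty X := ⟨0⟩
  haveI : SecondCountableTopology X := UniformSpace.secondCountable_of_separable X
  refine ⟨?_, ?_, ?_⟩
  · set xs : ℕ → X := TopologicalSpace.denseSeq X with hxs
    have hdense : DenseRange xs := TopologicalSpace.denseRange_denseSeq X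
    set E : ℕ → ℚ → Set Ω := fun n d =>
      Prod.fst '' ({p : Ω × X | p.2 ∈ C p.1} ∩ Prod.snd ⁻¹' Metric.ball (xs n) (d : ℝ)) with hE
    have hEm : ∀ n d, MeasurableSet (E n d) := fun n d =>
      Stmt8Aux.measurable_projection P hPc
        (hCgr.inter (measurable_snd Metric.isOpen_ball.measurableSet))
    have hSeq : {p : Ω × WeakDual ℝ X | ∀ x ∈ C p.1, p.2 x ≤ 1} =
        ⋂ (n : ℕ) (d : ℚ) (_ : 0 < d),
          {p : Ω × WeakDual ℝ X | p.1 ∈ E n d →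
            ∃ k, xs k ∈ Metric.ball (xs n) (d : ℝ) ∧ p.2 (xs k) ≤ 1} := by
      ext ⟨ω, u⟩
      simp only [mem_setOf_eq, mem_iInter]
      constructor
      · intro h n d _ hEnd
        obtain ⟨⟨ω', x₀⟩, ⟨hx₀C, hx₀b⟩, hfst⟩ := hEnd
        simp only [mem_setOf_eq, mem_preimage] at hx₀C hx₀b
        cases hfst
        have hux₀ : u x₀ ≤ 1 := h x₀ hx₀C
        by_cases hzero : ∀ v : X, u v = 0
        · obtain ⟨k, hk⟩ := hdense.exists_mem_open Metric.isOpen_ball ⟨x₀, hx₀b⟩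
          exact ⟨k, hk, by rw [hzero]; norm_num⟩
        · push_neg at hzero
          obtain ⟨v, hv⟩ := hzero
          obtain ⟨w, hw⟩ : ∃ w : X, u w < 0 := by
            rcases lt_or_gt_of_ne hv with h' | h'
            · exact ⟨v, h'⟩
            · exact ⟨-v, by rw [map_neg]; linarith⟩
          have hU : IsOpen (Metric.ball (xs n) (d : ℝ) ∩ {y : X | u y < 1}) :=
            Metric.isOpen_ball.inter (isOpen_lt (map_continuous u) continuous_const)
          obtain ⟨r, hr0, hrsub⟩ := Metric.isOpen_iff.mp Metric.isOpen_ball x₀ hx₀b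
          have hwn : (0:ℝ) < ‖w‖ + 1 := by positivity
          set t : ℝ := r / (2 * (‖w‖ + 1)) with ht
          have ht0 : 0 < t := by positivity
          have hy₀b : x₀ + t • w ∈ Metric.ball (xs n) (d : ℝ) := by
            refine hrsub ?_
            rw [Metric.mem_ball, dist_eq_norm, add_sub_cancel_left, norm_smul,
              Real.norm_eq_abs, abs_of_pos ht0]
            have h1 : t * ‖w‖ ≤ t * (‖w‖ + 1) := by nlinarith [norm_nonneg w]
            have h2 : t * (‖w‖ + 1) = r / 2 := by
              rw [ht]; field_simp
            linarith
          have hy₀u : u (x₀ + t • w) < 1 := by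
            rw [map_add, _root_.map_smul, smul_eq_mul]
            nlinarith
          obtain ⟨k, hk⟩ := hdense.exists_mem_open hU ⟨x₀ + t • w, hy₀b, hy₀u⟩
          exact ⟨k, hk.1, hk.2.le⟩
      · intro h x₀ hx₀
        by_contra hgt
        push_neg at hgt
        have hU : IsOpen {y : X | 1 < u y} := isOpen_lt continuous_const (map_continuous u)
        obtain ⟨r, hr0, hrsub⟩ := Metric.isOpen_iff.mp hU x₀ hgt
        obtain ⟨n, hn⟩ := hdense.exists_dist_lt x₀ (by positivity : 0 < r / 3)
        obtain ⟨d, hd1, hd2⟩ := exists_rat_btwn (by linarith : r / 3 < r / 2)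
        have hd0 : 0 < d := by
          have : (0:ℝ) < (d:ℝ) := lt_trans (by positivity) hd1
          exact_mod_cast this
        have hmem : ω ∈ E n d :=
          ⟨(ω, x₀), ⟨hx₀, by rw [mem_preimage, Metric.mem_ball]; exact lt_trans hn hd1⟩, rfl⟩
        obtain ⟨k, hkball, hkle⟩ := h n d hd0 hmem
        have hkU : xs k ∈ Metric.ball x₀ r := by
          rw [Metric.mem_ball] at hkball ⊢
          have h4 := dist_triangle (xs k) (xs n) x₀
          have h5 : dist (xs n) x₀ = dist x₀ (xs n) := dist_comm _ _
          linarith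
        have := hrsub hkU
        simp only [mem_setOf_eq] at this
        linarith
    rw [hSeq]
    refine MeasurableSet.iInter fun n => MeasurableSet.iInter fun d =>
      MeasurableSet.iInter fun hd => ?_
    have heq : {p : Ω × WeakDual ℝ X | p.1 ∈ E n d →
        ∃ k, xs k ∈ Metric.ball (xs n) (d : ℝ) ∧ p.2 (xs k) ≤ 1}
        = (Prod.fst ⁻¹' (E n d))ᶜ ∪ (Prod.snd ⁻¹'
            {u : WeakDual ℝ X | ∃ k, xs k ∈ Metric.ball (xs n) (d : ℝ) ∧ u (xs k) ≤ 1}) := by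
      ext p
      simp [imp_iff_not_or]
    rw [heq]
    refine MeasurableSet.union (measurable_fst (hEm n d)).compl (measurable_snd ?_)
    have heq2 : {u : WeakDual ℝ X | ∃ k, xs k ∈ Metric.ball (xs n) (d : ℝ) ∧ u (xs k) ≤ 1}
        = ⋃ k, {u : WeakDual ℝ X | xs k ∈ Metric.ball (xs n) (d : ℝ) ∧ u (xs k) ≤ 1} := by
      ext u; simp
    rw [heq2]
    refine MeasurableSet.iUnion fun k => ?_
    by_cases hk : xs k ∈ Metric.ball (xs n) (d : ℝ)
    · have : {u : WeakDual ℝ X | xs k ∈ Metric.ball (xs n) (d : ℝ) ∧ u (xs k) ≤ 1}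
          = {u : WeakDual ℝ X | u (xs k) ≤ 1} := by ext u; simp [hk]
      rw [this]
      exact (isClosed_le (WeakDual.eval_continuous _) continuous_const).measurableSet
    · have : {u : WeakDual ℝ X | xs k ∈ Metric.ball (xs n) (d : ℝ) ∧ u (xs k) ≤ 1}
          = (∅ : Set (WeakDual ℝ X)) := by ext u; simp [hk]
      rw [this]
      exact MeasurableSet.empty
  · intro ω
    have : {u : WeakDual ℝ X | ∀ x ∈ C ω, u x ≤ 1}
        = ⋂ x ∈ C ω, {u : WeakDual ℝ X | u x ≤ 1} := by ext u; simp
    rw [this]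
    exact isClosed_biInter fun x _ =>
      isClosed_le (WeakDual.eval_continuous x) continuous_const
  · intro ω u hu v hv a b ha hb hab
    intro x hx
    have h1 : (a • u + b • v) x = a * u x + b * v x := rfl
    simp only [mem_setOf_eq] at hu hv
    calc (a • u + b • v) x = a * u x + b * v x := h1
      _ ≤ a * 1 + b * 1 :=
        add_le_add (mul_le_mul_of_nonneg_left (hu x hx) ha)
          (mul_le_mul_of_nonneg_left (hv x hx) hb)
      _ = 1 := by rw [mul_one, mul_one, hab]
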